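/- Let δ ∈ F_{5^8}^* with δ ≠ 1, δ ≠ -1, and δ⁴ = 1 (i.e., the multiplicative order of δ divides 4). Then the map S : F_{5^8} → F_{5^8} given by S(x) = x^5 + δx^{5^5} is scattered of index 0 over F_{5^8}. -/

import Mathlib

/-- A map `S : L → L` on the field `L = F_{5^8}` is scattered of index `t` over
`F_{5^8}/F_5` if for all nonzero `y, z`, `S(y)/y^{5^t} = S(z)/z^{5^t}` implies
`y/z ∈ F_5`.  Membership of `y/z` in the prime subfield `F_5` is expressed via
its characterization as the fixed field of the `5`-power Frobenius:
`(y/z)^5 = y/z`. -/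
def IsScattered (q t : ℕ) {L : Type} [Field L] (S : L → L) : Prop :=
  ∀ y z : L, y ≠ 0 → z ≠ 0 → S y * z ^ q ^ t = S z * y ^ q ^ t → (y / z) ^ q = y / z

section aux

set_option linter.unusedSectionVars false

variable {L : Type} [Field L] [CharP L 5]

private lemma frob_add5 (x y : L) : (x + y)^(5:ℕ) = x^5 + y^5 := by
  haveI : Fact (Nat.Prime 5) := ⟨by norm_num⟩
  have h := add_pow_char_pow (R := L) (p := 5) x y 1
  rwa [pow_one] at h

private lemma frob_sub5 (x y : L) : (x - y)^(5:ℕ) = x^5 - y^5 := by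
  haveI : Fact (Nat.Prime 5) := ⟨by norm_num⟩
  have h := sub_pow_char_pow (R := L) (p := 5) x y 1
  rwa [pow_one] at h

private lemma frob_neg5 (x : L) : (-x)^(5:ℕ) = -x^5 := by
  have h := frob_sub5 (0:L) x
  simpa using h

private lemma two_ne_zero5 : (2:L) ≠ 0 := by
  have : ((2:ℕ):L) ≠ 0 := by
    rw [Ne, CharP.cast_eq_zero_iff L 5 2]; norm_num
  simpa using this

private lemma half_cancel5 {x : L} (h : 2 * x = 0) : x = 0 := by
  rcases mul_eq_zero.mp h with h' | h'
  · exact absurd h' two_ne_zero5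
  · exact h'

private lemma key_lemma (X R : L)
    (h1 : X^2 + (X^5)^2 = R^2)
    (hX4 : (((X^5)^5)^5)^5 = -X)
    (hR4 : (((R^5)^5)^5)^5 = R)
    (htr : R + R^5 + (R^5)^5 + ((R^5)^5)^5 = 0) : X = 0 := by
  have hsq : ∀ x : L, (x^2)^(5:ℕ) = (x^5)^2 := fun x => pow_right_comm x 2 5
  have f2 : (X^5)^2 + ((X^5)^5)^2 = (R^5)^2 := by
    have h := congrArg (fun t : L => t^(5:ℕ)) h1
    simp only [frob_add5, hsq] at h
    exact h
  have f3 : ((X^5)^5)^2 + (((X^5)^5)^5)^2 = ((R^5)^5)^2 := by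
    have h := congrArg (fun t : L => t^(5:ℕ)) f2
    simp only [frob_add5, hsq] at h
    exact h
  have f4 : (((X^5)^5)^5)^2 + X^2 = (((R^5)^5)^5)^2 := by
    have h := congrArg (fun t : L => t^(5:ℕ)) f3
    simp only [frob_add5, hsq] at h
    rw [hX4] at h
    linear_combination h
  have g1 : R^2 - (R^5)^2 + ((R^5)^5)^2 - (((R^5)^5)^5)^2 = 0 := by
    linear_combination f2 - h1 + f4 - f3
  have g2 : ((R^5 - ((R^5)^5)^5) - (R - (R^5)^5)) * ((R^5 - ((R^5)^5)^5) + (R - (R^5)^5)) = 0 := by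
    linear_combination (-2 : L) * g1 + (R - R^5 + (R^5)^5 - ((R^5)^5)^5) * htr
  have hE : R^2 = (R^5)^2 := by
    rcases mul_eq_zero.mp g2 with h | h
    · have hwf : (R - (R^5)^5)^5 = R^5 - ((R^5)^5)^5 := by rw [frob_sub5]
      have hfix : (R - (R^5)^5)^5 = R - (R^5)^5 := by
        rw [hwf]; linear_combination h
      have hw2 : ((R - (R^5)^5)^5)^5 = (R^5)^5 - R := by
        rw [hwf, frob_sub5, hR4]
      have hw0 : R - (R^5)^5 = 0 := by
        apply half_cancel5
        rw [hfix, hfix] at hw2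
        linear_combination hw2
      have hE13 : R = (R^5)^5 := by linear_combination hw0
      rw [← hE13] at g1
      have h' : 2*(R^2 - (R^5)^2) = 0 := by linear_combination g1
      have h'' := half_cancel5 h'
      linear_combination h''
    · have h' : 2*(R^5 + R) = 0 := by linear_combination h + htr
      have h'' := half_cancel5 h'
      linear_combination (R - R^5) * h''
  have hm : (((X^5)^5) - X) * (((X^5)^5) + X) = 0 := by
    linear_combination f2 - h1 - hE
  have hX0 : 2 * X = 0 := by
    rcases mul_eq_zero.mp hm with h | h
    · have h' : (X^5)^5 = X := by linear_combination h
      rw [h', h'] at hX4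
      linear_combination hX4
    · have h' : (X^5)^5 = -X := by linear_combination h
      rw [h', frob_neg5, frob_neg5, h'] at hX4
      linear_combination hX4
  exact half_cancel5 hX0

private lemma pow5_2 (x : L) : x^(5^2:ℕ) = (x^5)^5 := by rw [← pow_mul]; norm_num
private lemma pow5_3 (x : L) : x^(5^3:ℕ) = ((x^5)^5)^5 := by rw [← pow_mul, ← pow_mul]; norm_num
private lemma pow5_4 (x : L) : x^(5^4:ℕ) = (((x^5)^5)^5)^5 := by
  rw [← pow_mul, ← pow_mul, ← pow_mul]; norm_num

private lemma key_lemma' (X R : L)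
    (h1 : X^2 + (X^5)^2 = R^2)
    (hX4 : X^(5^4:ℕ) = -X)
    (hR4 : R^(5^4:ℕ) = R)
    (htr : R + R^5 + R^(5^2:ℕ) + R^(5^3:ℕ) = 0) : X = 0 := by
  rw [pow5_4] at hX4 hR4
  rw [pow5_2, pow5_3] at htr
  exact key_lemma X R h1 hX4 hR4 htr

end aux

/-- Let δ ∈ F_{5^8}^* with δ ≠ 1, δ ≠ -1, and δ⁴ = 1.  Then
S(x) = x^5 + δx^{5^5} is scattered of index 0 over F_{5^8}. -/
theorem stmt14 (L : Type) [Field L] [Fintype L] (hcard : Fintype.card L = 5 ^ 8)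
    (δ : L) (hδ0 : δ ≠ 0) (hδ1 : δ ≠ 1) (hδm1 : δ ≠ -1) (hδord : δ ^ 4 = 1) :
    IsScattered 5 0 (fun x : L => x ^ 5 + δ * x ^ 5 ^ 5) := by
  haveI hch : CharP L 5 := by
    haveI := ringChar.charP L
    obtain ⟨n, hp, hc⟩ := FiniteField.card L (ringChar L)
    have h5 : ringChar L = 5 := by
      have hd : ringChar L ∣ 5 ^ 8 := by
        rw [← hcard, hc]; exact dvd_pow_self _ (by positivity)
      have := hp.dvd_of_dvd_pow hd
      exact (Nat.prime_dvd_prime_iff_eq hp (by norm_num)).mp this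
    rw [← h5]; exact ringChar.charP L
  haveI : Fact (Nat.Prime 5) := ⟨by norm_num⟩
  intro y z hy hz heq
  simp only [pow_zero, pow_one] at heq
  -- helpers
  have hred : ∀ x : L, x ^ (5^8:ℕ) = x := fun x => by
    rw [← hcard]; exact FiniteField.pow_card x
  have hcomp : ∀ (x : L) (a b c : ℕ), a * b = c → (x^a)^b = x^c := by
    intro x a b c h; rw [← pow_mul, h]
  have hsubp : ∀ (x w : L) (n : ℕ), (x - w)^((5:ℕ)^n) = x^((5:ℕ)^n) - w^((5:ℕ)^n) :=
    fun x w n => sub_pow_char_pow x w n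
  have haddp : ∀ (x w : L) (n : ℕ), (x + w)^((5:ℕ)^n) = x^((5:ℕ)^n) + w^((5:ℕ)^n) :=
    fun x w n => add_pow_char_pow (p := 5) x w n
  have hbig : ∀ x : L, (x^(5^5:ℕ))^(5^4:ℕ) = x^5 := fun x => by
    rw [← pow_mul, show (5^5 * 5^4 : ℕ) = 5^8 * 5 by norm_num, pow_mul, hred]
  -- delta facts
  have hδ2 : δ^2 = -1 := by
    have h0 : (δ^2 - 1) * (δ^2 + 1) = 0 := by linear_combination hδord
    rcases mul_eq_zero.mp h0 with h | h
    · exfalso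
      have h1 : (δ - 1) * (δ + 1) = 0 := by linear_combination h
      rcases mul_eq_zero.mp h1 with h' | h'
      · exact hδ1 (by linear_combination h')
      · exact hδm1 (by linear_combination h')
    · linear_combination h
  have hδ5 : δ^(5:ℕ) = δ := by linear_combination δ * hδord
  have hδ54 : δ^(5^4:ℕ) = δ := by
    rw [show ((5:ℕ)^4) = 5*5*5*5 by norm_num, pow_mul, pow_mul, pow_mul]
    simp only [hδ5]
  -- u = y/z
  set u := y / z with hu_def
  have hy' : y = u * z := ((eq_div_iff hz).mp hu_def).symm
  rw [hy'] at heq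
  rw [mul_pow, mul_pow] at heq
  -- base relation
  have key0 : (u^5 - u) * z^5 = δ * ((u - u^(5^5:ℕ)) * z^(5^5:ℕ)) := by
    apply mul_right_cancel₀ hz
    linear_combination heq
  have key0' : (u^(5^5:ℕ) - u^(5^4:ℕ)) * z^(5^5:ℕ) = δ * ((u^(5^4:ℕ) - u^5) * z^5) := by
    have h := congrArg (fun t : L => t^(5^4:ℕ)) key0
    simp only [mul_pow] at h
    rw [hsubp, hsubp, hδ54] at h
    rw [hcomp u 5 (5^4) (5^5) (by norm_num), hcomp z 5 (5^4) (5^5) (by norm_num),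
        hbig u, hbig z] at h
    exact h
  have hzz : z^5 * z^(5^5:ℕ) ≠ 0 := mul_ne_zero (pow_ne_zero _ hz) (pow_ne_zero _ hz)
  have main : (u^5 - u) * (u^(5^5:ℕ) - u^(5^4:ℕ))
      = -((u - u^(5^5:ℕ)) * (u^(5^4:ℕ) - u^5)) := by
    apply mul_right_cancel₀ hzz
    linear_combination ((u^(5^5:ℕ) - u^(5^4:ℕ)) * z^(5^5:ℕ)) * key0
      + (δ * ((u - u^(5^5:ℕ)) * z^(5^5:ℕ))) * key0'
      + ((u - u^(5^5:ℕ)) * z^(5^5:ℕ) * ((u^(5^4:ℕ) - u^5) * z^5)) * hδ2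
  -- inputs for the key lemma
  have hXf : (u - u^(5^4:ℕ))^(5:ℕ) = u^5 - u^(5^5:ℕ) := by
    rw [frob_sub5, hcomp u (5^4) 5 (5^5) (by norm_num)]
  have h1 : (u - u^(5^4:ℕ))^2 + ((u - u^(5^4:ℕ))^5)^2
      = ((u + u^(5^4:ℕ)) - (u^5 + u^(5^5:ℕ)))^2 := by
    rw [hXf]; linear_combination (-2:L) * main
  have hX4e : (u - u^(5^4:ℕ))^(5^4:ℕ) = -(u - u^(5^4:ℕ)) := by
    rw [hsubp u (u^(5^4:ℕ)) 4, hcomp u (5^4) (5^4) (5^8) (by norm_num), hred u]; ring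
  have hR4e : ((u + u^(5^4:ℕ)) - (u^5 + u^(5^5:ℕ)))^(5^4:ℕ)
      = (u + u^(5^4:ℕ)) - (u^5 + u^(5^5:ℕ)) := by
    rw [hsubp, haddp, haddp, hcomp u (5^4) (5^4) (5^8) (by norm_num), hred u,
        hcomp u 5 (5^4) (5^5) (by norm_num), hbig u]
    ring
  have e1 : ((u + u^(5^4:ℕ)) - (u^5 + u^(5^5:ℕ)))^(5:ℕ)
      = (u^5 + u^(5^5:ℕ)) - (u^(5^2:ℕ) + u^(5^6:ℕ)) := by
    rw [frob_sub5, frob_add5, frob_add5, hcomp u (5^4) 5 (5^5) (by norm_num),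
        hcomp u 5 5 (5^2) (by norm_num), hcomp u (5^5) 5 (5^6) (by norm_num)]
  have e2 : ((u + u^(5^4:ℕ)) - (u^5 + u^(5^5:ℕ)))^(5^2:ℕ)
      = (u^(5^2:ℕ) + u^(5^6:ℕ)) - (u^(5^3:ℕ) + u^(5^7:ℕ)) := by
    rw [hsubp, haddp, haddp, hcomp u (5^4) (5^2) (5^6) (by norm_num),
        hcomp u 5 (5^2) (5^3) (by norm_num), hcomp u (5^5) (5^2) (5^7) (by norm_num)]
  have e3 : ((u + u^(5^4:ℕ)) - (u^5 + u^(5^5:ℕ)))^(5^3:ℕ)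
      = (u^(5^3:ℕ) + u^(5^7:ℕ)) - (u^(5^4:ℕ) + u) := by
    rw [hsubp, haddp, haddp, hcomp u (5^4) (5^3) (5^7) (by norm_num),
        hcomp u 5 (5^3) (5^4) (by norm_num), hcomp u (5^5) (5^3) (5^8) (by norm_num),
        hred u]
  have htre : ((u + u^(5^4:ℕ)) - (u^5 + u^(5^5:ℕ)))
      + ((u + u^(5^4:ℕ)) - (u^5 + u^(5^5:ℕ)))^5
      + ((u + u^(5^4:ℕ)) - (u^5 + u^(5^5:ℕ)))^(5^2:ℕ)
      + ((u + u^(5^4:ℕ)) - (u^5 + u^(5^5:ℕ)))^(5^3:ℕ) = 0 := by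
    rw [e1, e2, e3]; ring
  have hX0 : u - u^(5^4:ℕ) = 0 := key_lemma' _ _ h1 hX4e hR4e htre
  have hc : u^(5^4:ℕ) = u := by linear_combination -hX0
  rw [hX0] at h1
  have hR0 : (u + u^(5^4:ℕ)) - (u^5 + u^(5^5:ℕ)) = 0 := by
    have hr2 : ((u + u^(5^4:ℕ)) - (u^5 + u^(5^5:ℕ)))^2 = 0 := by
      rw [← h1]; norm_num
    exact sq_eq_zero_iff.mp hr2
  have hd : u^(5^5:ℕ) = u^5 := by
    rw [← hcomp u (5^4) 5 (5^5) (by norm_num), hc]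
  rw [hc, hd] at hR0
  have hfin : 2 * (u - u^5) = 0 := by linear_combination hR0
  have hhalf := half_cancel5 hfin
  linear_combination -hhalf
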